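/- For every fixed positive integer h there is a constant C = C(h) such that for all positive integers k, the k-th positive element of the greedy B_h-set satisfies γ_k(h) ≥ k^h/(h·h!) − C·k^{h−1}. -/

import Mathlib

/-- A set `A` of nonnegative integers is a `B_h`-set if every solution to
`a_1 + ... + a_h = b_1 + ... + b_h` with all `a_i, b_i ∈ A` has
`{a_1, ..., a_h} = {b_1, ..., b_h}` as multisets. -/
def IsBhSet (h : ℕ) (A : Set ℕ) : Prop :=
  ∀ a b : Fin h → ℕ, (∀ i, a i ∈ A) → (∀ i, b i ∈ A) →
    (∑ i, a i) = (∑ i, b i) →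
    Multiset.map a Finset.univ.val = Multiset.map b Finset.univ.val

lemma count_map_fn {h : ℕ} (f : Fin h → ℕ) (c : ℕ) :
    (Multiset.map f Finset.univ.val).count c = (Finset.univ.filter fun i => f i = c).card := by
  classical
  rw [Multiset.count_map, Finset.card, Finset.filter_val]
  exact congrArg _ (Multiset.filter_congr (fun x _ => eq_comm))

lemma exists_fn {h : ℕ} (M : Multiset ℕ) (hM : Multiset.card M = h) :
    ∃ a : Fin h → ℕ, Multiset.map a Finset.univ.val = M ∧ (∑ i, a i) = M.sum := by
  induction M using Quotient.inductionOn with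
  | h l =>
    have hl : l.length = h := by simpa using hM
    refine ⟨fun i => l.get (Fin.cast hl.symm i), ?_, ?_⟩
    · rw [Fin.univ_val_map]
      have : List.ofFn (fun i => l.get (Fin.cast hl.symm i)) = l := by
        apply List.ext_get
        · simp [hl]
        · intro n h1 h2
          simp
      rw [this]
      rfl
    · have : List.ofFn (fun i => l.get (Fin.cast hl.symm i)) = l := by
        apply List.ext_get
        · simp [hl]
        · intro n h1 h2
          simp
      calc (∑ i, l.get (Fin.cast hl.symm i))
          = (List.ofFn (fun i => l.get (Fin.cast hl.symm i))).sum := (List.sum_ofFn).symm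
        _ = l.sum := by rw [this]
        _ = (l : Multiset ℕ).sum := rfl

lemma isBhSet_singleton_zero (h : ℕ) : IsBhSet h (({0} : Finset ℕ) : Set ℕ) := by
  intro a b ha hb _
  have hab : a = b := by
    funext i
    have h1 := ha i; have h2 := hb i
    simp only [Finset.coe_singleton, Set.mem_singleton_iff] at h1 h2
    rw [h1, h2]
  rw [hab]

lemma aux_cancel {Sa Sb p q x K : ℕ} (heq : Sa + p * x = Sb + q * x)
    (h1 : Sa ≤ K) (h2 : Sb ≤ K) (h3 : K < x) : p = q := by
  rcases lt_trichotomy p q with hlt | he | hgt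
  · exfalso
    have hq : p * x + x ≤ q * x := by
      have := Nat.mul_le_mul_right x (Nat.succ_le_of_lt hlt)
      simpa [Nat.succ_mul] using this
    linarith
  · exact he
  · exfalso
    have hq : q * x + x ≤ p * x := by
      have := Nat.mul_le_mul_right x (Nat.succ_le_of_lt hgt)
      simpa [Nat.succ_mul] using this
    linarith

lemma isBhSet_insert {h : ℕ} (hh : 1 ≤ h) {A : Finset ℕ} (h0 : (0:ℕ) ∈ A)
    (hB : IsBhSet h (A : Set ℕ)) {M x : ℕ} (hM : ∀ y ∈ A, y ≤ M) (hx : h * M < x) :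
    IsBhSet h ((insert x A : Finset ℕ) : Set ℕ) := by
  have hMx : M < x := lt_of_le_of_lt (Nat.le_mul_of_pos_left M hh) hx
  have hx0 : x ≠ 0 := by
    intro hc; rw [hc] at hMx; omega
  intro a b ha hb hsum
  -- generic facts about truncation
  have key : ∀ f : Fin h → ℕ, (∀ i, f i ∈ ((insert x A : Finset ℕ) : Set ℕ)) →
      (∀ i, (if f i = x then 0 else f i) ∈ (A : Set ℕ)) ∧
      (∑ i, f i) = (∑ i, (if f i = x then 0 else f i)) +
        (Finset.univ.filter fun i => f i = x).card * x ∧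
      (∑ i, (if f i = x then 0 else f i)) ≤ h * M := by
    intro f hf
    have hmem : ∀ i, (if f i = x then 0 else f i) ∈ (A : Set ℕ) := by
      intro i
      by_cases hi : f i = x
      · simpa [hi] using h0
      · have := hf i
        simp only [Finset.coe_insert, Set.mem_insert_iff, Finset.mem_coe] at this
        simp [hi]
        tauto
    refine ⟨hmem, ?_, ?_⟩
    · have h1 : ∀ i, f i = (if f i = x then 0 else f i) + (if f i = x then x else 0) := by
        intro i; by_cases hi : f i = x <;> simp [hi]
      calc (∑ i, f i) = ∑ i, ((if f i = x then 0 else f i) + (if f i = x then x else 0)) :=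
            Finset.sum_congr rfl (fun i _ => h1 i)
        _ = (∑ i, (if f i = x then 0 else f i)) + ∑ i, (if f i = x then x else 0) :=
            Finset.sum_add_distrib
        _ = (∑ i, (if f i = x then 0 else f i)) +
            (Finset.univ.filter fun i => f i = x).card * x := by
            congr 1
            rw [Finset.sum_ite, Finset.sum_const, Finset.sum_const_zero, add_zero,
              smul_eq_mul]
    · have : ∀ i ∈ Finset.univ, (if f i = x then 0 else f i) ≤ M := by
        intro i _
        by_cases hi : f i = x
        · simp [hi]
        · simpa [hi] using hM _ (hmem i)
      calc (∑ i, (if f i = x then 0 else f i)) ≤ Finset.univ.card • M :=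
            Finset.sum_le_card_nsmul _ _ _ this
        _ = h * M := by simp [mul_comm]
  obtain ⟨haA, hasum, hale⟩ := key a ha
  obtain ⟨hbA, hbsum, hble⟩ := key b hb
  have heq : (∑ i, (if a i = x then 0 else a i))
        + (Finset.univ.filter fun i => a i = x).card * x
      = (∑ i, (if b i = x then 0 else b i))
        + (Finset.univ.filter fun i => b i = x).card * x := by
    rw [← hasum, ← hbsum]; exact hsum
  have hmn : (Finset.univ.filter fun i => a i = x).card
      = (Finset.univ.filter fun i => b i = x).card :=
    aux_cancel heq hale hble hx
  have hsum' : (∑ i, (if a i = x then 0 else a i))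
      = (∑ i, (if b i = x then 0 else b i)) := by
    rw [hmn] at heq; exact Nat.add_right_cancel heq
  have hmul := hB (fun i => if a i = x then 0 else a i)
    (fun i => if b i = x then 0 else b i) haA hbA hsum'
  have cntfact : ∀ c : ℕ,
      (Finset.univ.filter fun i => (if a i = x then 0 else a i) = c).card
      = (Finset.univ.filter fun i => (if b i = x then 0 else b i) = c).card := by
    intro c
    rw [← count_map_fn, ← count_map_fn, hmul]
  have zdec : ∀ f : Fin h → ℕ,
      (Finset.univ.filter fun i => (if f i = x then 0 else f i) = 0).card
      = (Finset.univ.filter fun i => f i = 0).card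
        + (Finset.univ.filter fun i => f i = x).card := by
    intro f
    have hset : (Finset.univ.filter fun i => (if f i = x then 0 else f i) = 0)
        = (Finset.univ.filter fun i => f i = 0) ∪ (Finset.univ.filter fun i => f i = x) := by
      ext i
      by_cases hi : f i = x <;> simp [hi] <;> omega
    rw [hset, Finset.card_union_of_disjoint]
    rw [Finset.disjoint_left]
    intro i hi1 hi2
    simp only [Finset.mem_filter] at hi1 hi2
    exact hx0 (hi2.2 ▸ hi1.2)
  rw [Multiset.ext]
  intro c
  rw [count_map_fn, count_map_fn]
  by_cases hc : c = x
  · subst hc; exact hmn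
  · by_cases hc0 : c = 0
    · subst hc0
      have za := zdec a
      have zb := zdec b
      have hcf := cntfact 0
      omega
    · have fa : (Finset.univ.filter fun i => a i = c)
          = (Finset.univ.filter fun i => (if a i = x then 0 else a i) = c) := by
        ext i
        by_cases hi : a i = x <;> simp [hi] <;> omega
      have fb : (Finset.univ.filter fun i => b i = c)
          = (Finset.univ.filter fun i => (if b i = x then 0 else b i) = c) := by
        ext i
        by_cases hi : b i = x <;> simp [hi] <;> omega
      rw [fa, fb]
      exact cntfact c

/-- Auxiliary construction of the greedy `B_h`-set: `greedyAux h k` is the pair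
consisting of the `k`-th element `γ_k(h)` of the greedy `B_h`-set together with
the finite set `{γ_0(h), ..., γ_k(h)}`.  We have `γ_0(h) = 0`, `γ_1(h) = 1`, and
for `k ≥ 1`, `γ_{k+1}(h)` is the smallest integer greater than `γ_k(h)` such
that `{γ_0(h), ..., γ_k(h), γ_{k+1}(h)}` is a `B_h`-set. -/
noncomputable def greedyAux (h : ℕ) : ℕ → ℕ × Finset ℕ
  | 0 => (0, {0})
  | (k + 1) =>
    let p := greedyAux h k
    let g := if k = 0 then 1
      else sInf {x : ℕ | p.1 < x ∧ IsBhSet h ((insert x p.2 : Finset ℕ) : Set ℕ)}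
    (g, insert g p.2)

/-- `greedy h k` is the `k`-th element `γ_k(h)` of the greedy `B_h`-set. -/
noncomputable def greedy (h k : ℕ) : ℕ := (greedyAux h k).1

lemma greedy_facts (h : ℕ) (hh : 1 ≤ h) : ∀ k : ℕ,
    (0 : ℕ) ∈ (greedyAux h k).2 ∧ (∀ y ∈ (greedyAux h k).2, y ≤ (greedyAux h k).1) ∧
    (greedyAux h k).2.card = k + 1 ∧ IsBhSet h (((greedyAux h k).2 : Finset ℕ) : Set ℕ) := by
  intro k
  induction k with
  | zero =>
    refine ⟨by simp [greedyAux], ?_, by simp [greedyAux], ?_⟩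
    · intro y hy
      simp [greedyAux] at hy ⊢
      omega
    · have : (greedyAux h 0).2 = {0} := by simp [greedyAux]
      rw [this]
      exact isBhSet_singleton_zero h
  | succ k ih =>
    obtain ⟨ih0, ihle, ihcard, ihB⟩ := ih
    rcases Nat.eq_zero_or_pos k with hk | hk
    · subst hk
      have hS : (greedyAux h 0).2 = {0} := by simp [greedyAux]
      have hg : (greedyAux h 1).1 = 1 := by simp [greedyAux]
      have hS1 : (greedyAux h 1).2 = insert 1 {0} := by simp [greedyAux]
      refine ⟨?_, ?_, ?_, ?_⟩
      · rw [hS1]; simp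
      · intro y hy
        rw [hS1] at hy
        rw [hg]
        simp at hy
        omega
      · rw [hS1]
        rw [Finset.card_insert_of_notMem (by simp)]
        simp
      · rw [hS1]
        have : (insert 1 {0} : Finset ℕ) = insert 1 ({0} : Finset ℕ) := rfl
        refine isBhSet_insert hh (by simp) (isBhSet_singleton_zero h) (M := 0) ?_ ?_
        · intro y hy; simp at hy; omega
        · omega
    · -- k ≥ 1
      have hk0 : k ≠ 0 := Nat.pos_iff_ne_zero.mp hk
      set γ := (greedyAux h k).1 with hγ
      set S := (greedyAux h k).2 with hSdef
      have hgdef : (greedyAux h (k+1)).1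
          = sInf {x : ℕ | γ < x ∧ IsBhSet h ((insert x S : Finset ℕ) : Set ℕ)} := by
        simp [greedyAux, hk0, hγ, hSdef]
      have hSdef1 : (greedyAux h (k+1)).2 = insert ((greedyAux h (k+1)).1) S := by
        simp [greedyAux, hk0, hγ, hSdef]
      have hne : {x : ℕ | γ < x ∧ IsBhSet h ((insert x S : Finset ℕ) : Set ℕ)}.Nonempty := by
        refine ⟨h * γ + 1, ?_, ?_⟩
        · have : γ ≤ h * γ := Nat.le_mul_of_pos_left γ hh
          omega
        · exact isBhSet_insert hh ih0 ihB (M := γ) ihle (by omega)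
      have hgmem := Nat.sInf_mem hne
      rw [← hgdef] at hgmem
      obtain ⟨hglt, hgB⟩ := hgmem
      have hgnotS : (greedyAux h (k+1)).1 ∉ S := by
        intro hc
        have := ihle _ hc
        omega
      refine ⟨?_, ?_, ?_, ?_⟩
      · rw [hSdef1]; exact Finset.mem_insert_of_mem ih0
      · intro y hy
        rw [hSdef1] at hy
        rcases Finset.mem_insert.mp hy with h1 | h1
        · omega
        · have := ihle _ h1; omega
      · rw [hSdef1, Finset.card_insert_of_notMem hgnotS, ihcard]
      · rw [hSdef1]
        exact hgB

lemma choose_le_of_bh {h : ℕ} (S : Finset ℕ) {k γ : ℕ} (hcard : S.card = k + 1)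
    (hle : ∀ y ∈ S, y ≤ γ) (hB : IsBhSet h (S : Set ℕ)) :
    (k + h).choose h ≤ h * γ + 1 := by
  classical
  have hbound : ∀ m : Sym {y // y ∈ S} h,
      (Multiset.map Subtype.val (m : Multiset {y // y ∈ S})).sum < h * γ + 1 := by
    intro m
    have hb : ∀ u ∈ Multiset.map Subtype.val (m : Multiset {y // y ∈ S}), u ≤ γ := by
      intro u hu
      obtain ⟨z, _, rfl⟩ := Multiset.mem_map.mp hu
      exact hle _ z.2
    have h1 := Multiset.sum_le_card_nsmul _ γ hb
    rw [Multiset.card_map] at h1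
    have h2 : Multiset.card (m : Multiset {y // y ∈ S}) = h := m.2
    rw [h2, smul_eq_mul] at h1
    omega
  set F : Sym {y // y ∈ S} h → Fin (h * γ + 1) := fun m =>
    ⟨(Multiset.map Subtype.val (m : Multiset {y // y ∈ S})).sum, hbound m⟩ with hF
  have hinj : Function.Injective F := by
    intro m₁ m₂ hFeq
    have hsumeq : (Multiset.map Subtype.val (m₁ : Multiset {y // y ∈ S})).sum
        = (Multiset.map Subtype.val (m₂ : Multiset {y // y ∈ S})).sum := by
      have := congrArg Fin.val hFeq
      simpa [hF] using this
    obtain ⟨a, haeq, hasum⟩ := exists_fn (h := h)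
      (Multiset.map Subtype.val (m₁ : Multiset {y // y ∈ S}))
      (by rw [Multiset.card_map]; exact m₁.2)
    obtain ⟨b, hbeq, hbsum⟩ := exists_fn (h := h)
      (Multiset.map Subtype.val (m₂ : Multiset {y // y ∈ S}))
      (by rw [Multiset.card_map]; exact m₂.2)
    have haS : ∀ i, a i ∈ (S : Set ℕ) := by
      intro i
      have : a i ∈ Multiset.map a Finset.univ.val :=
        Multiset.mem_map.mpr ⟨i, Finset.mem_univ_val i, rfl⟩
      rw [haeq] at this
      obtain ⟨z, _, hz⟩ := Multiset.mem_map.mp this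
      rw [← hz]; exact z.2
    have hbS : ∀ i, b i ∈ (S : Set ℕ) := by
      intro i
      have : b i ∈ Multiset.map b Finset.univ.val :=
        Multiset.mem_map.mpr ⟨i, Finset.mem_univ_val i, rfl⟩
      rw [hbeq] at this
      obtain ⟨z, _, hz⟩ := Multiset.mem_map.mp this
      rw [← hz]; exact z.2
    have hmul := hB a b haS hbS (by rw [hasum, hbsum]; exact hsumeq)
    have hMeq : Multiset.map Subtype.val (m₁ : Multiset {y // y ∈ S})
        = Multiset.map Subtype.val (m₂ : Multiset {y // y ∈ S}) := by
      rw [← haeq, ← hbeq, hmul]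
    have : (m₁ : Multiset {y // y ∈ S}) = (m₂ : Multiset {y // y ∈ S}) :=
      Multiset.map_injective (fun z w hzw => Subtype.ext hzw) hMeq
    exact Subtype.ext this
  have hcardle := Fintype.card_le_of_injective F hinj
  rw [Sym.card_sym_eq_choose, Fintype.card_coe, hcard, Fintype.card_fin] at hcardle
  have : k + 1 + h - 1 = k + h := by omega
  rw [this] at hcardle
  exact hcardle

theorem stmt_5 (h : ℕ) (hh : 1 ≤ h) :
    ∃ C : ℝ, ∀ k : ℕ, 1 ≤ k →
      (greedy h k : ℝ) ≥ (k : ℝ) ^ h / (h * Nat.factorial h) - C * (k : ℝ) ^ (h - 1) := by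
  refine ⟨1, ?_⟩
  intro k hk
  obtain ⟨h0, hle, hcard, hB⟩ := greedy_facts h hh k
  have hch : (k + h).choose h ≤ h * greedy h k + 1 :=
    choose_le_of_bh (γ := greedy h k) (greedyAux h k).2 hcard hle hB
  have hdesc : (k + 1) ^ h ≤ (k + h).descFactorial h := by
    have h1 := Nat.pow_sub_le_descFactorial (k + h) h
    have he : k + h + 1 - h = k + 1 := by omega
    rwa [he] at h1
  rw [Nat.descFactorial_eq_factorial_mul_choose] at hdesc
  have hnat : k ^ h ≤ Nat.factorial h * (h * greedy h k + 1) :=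
    (Nat.pow_le_pow_left (Nat.le_succ k) h).trans
      (hdesc.trans (Nat.mul_le_mul_left _ hch))
  have hreal : (k : ℝ) ^ h ≤ (Nat.factorial h : ℝ) * ((h : ℝ) * (greedy h k : ℝ) + 1) := by
    exact_mod_cast hnat
  have hhpos : (0:ℝ) < (h : ℝ) := by exact_mod_cast hh
  have hfpos : (0:ℝ) < (Nat.factorial h : ℝ) := by exact_mod_cast h.factorial_pos
  have hdiv : (k:ℝ)^h / ((h:ℝ) * (Nat.factorial h : ℝ)) ≤ (greedy h k : ℝ) + 1 := by
    rw [div_le_iff₀ (by positivity)]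
    have hh1 : (1:ℝ) ≤ (h:ℝ) := by exact_mod_cast hh
    have hfh : (Nat.factorial h : ℝ) ≤ (h:ℝ) * (Nat.factorial h : ℝ) := by nlinarith [hfpos, hh1]
    nlinarith [hreal]
  have hk1R : (1:ℝ) ≤ (k:ℝ) := by exact_mod_cast hk
  have hpow1 : (1:ℝ) ≤ (k:ℝ) ^ (h-1) := one_le_pow₀ hk1R
  rw [ge_iff_le, sub_le_iff_le_add]
  push_cast
  linarith [hdiv, hpow1]
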